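/- Let A = [[a, b, c], [conj(b), d, e], [conj(c), conj(e), f]] be a 3×3 complex positive semidefinite Hermitian matrix (so a, d, f are real and nonnegative) with a > 0 and a·d − |b|² > 0. Then γ₊(A) ≤ ‖A‖₁,₁ + 2·(|a·e − conj(b)·c| + |b|·|c| − a·|e|)/a. In particular, if |a·e − conj(b)·c| + |b|·|c| = a·|e|, then γ₊(A) = ‖A‖₁,₁. -/

import Mathlib

open Matrix ComplexOrder

/-- The ℓ¹ norm of a vector in ℂⁿ. -/
noncomputable def l1n {n : ℕ} (x : Fin n → ℂ) : ℝ := ∑ i, ‖x i‖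

/-- The entrywise ℓ¹ norm ‖A‖₁,₁ of a matrix. -/
noncomputable def norm11 {n : ℕ} (A : Matrix (Fin n) (Fin n) ℂ) : ℝ :=
  ∑ i, ∑ j, ‖A i j‖

/-- The Frobenius norm of a matrix. -/
noncomputable def frobNorm {n : ℕ} (A : Matrix (Fin n) (Fin n) ℂ) : ℝ :=
  Real.sqrt (∑ i, ∑ j, ‖A i j‖ ^ 2)

/-- γ₊(A): infimum of Σ ‖g_k‖₁² over finite decompositions A = Σ g_k g_k*. -/
noncomputable def gammaPlus {n : ℕ} (A : Matrix (Fin n) (Fin n) ℂ) : ℝ :=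
  sInf {r : ℝ | ∃ (m : ℕ) (g : Fin m → Fin n → ℂ),
    A = ∑ k, vecMulVec (g k) (star (g k)) ∧ r = ∑ k, (l1n (g k)) ^ 2}

/-- γ(A): infimum of Σ ‖g_k‖₁‖h_k‖₁ over finite decompositions A = Σ g_k h_k*. -/
noncomputable def gammaCross {n : ℕ} (A : Matrix (Fin n) (Fin n) ℂ) : ℝ :=
  sInf {r : ℝ | ∃ (m : ℕ) (g h : Fin m → Fin n → ℂ),
    A = ∑ k, vecMulVec (g k) (star (h k)) ∧ r = ∑ k, l1n (g k) * l1n (h k)}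

/-- γ₀(A): infimum of γ₊(B) + γ₊(C) over decompositions A = B - C with B, C PSD. -/
noncomputable def gammaZero {n : ℕ} (A : Matrix (Fin n) (Fin n) ℂ) : ℝ :=
  sInf {r : ℝ | ∃ B C : Matrix (Fin n) (Fin n) ℂ, B.PosSemidef ∧ C.PosSemidef ∧
    A = B - C ∧ r = gammaPlus B + gammaPlus C}


private lemma norm11_le_sum' {n m : ℕ} (g : Fin m → Fin n → ℂ) :
    norm11 (∑ k, vecMulVec (g k) (star (g k))) ≤ ∑ k, (l1n (g k)) ^ 2 := by
  have h1 : ∀ i j : Fin n, ‖(∑ k, vecMulVec (g k) (star (g k))) i j‖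
      ≤ ∑ k, ‖g k i‖ * ‖g k j‖ := by
    intro i j
    simp only [Matrix.sum_apply, vecMulVec_apply, Pi.star_apply]
    refine (norm_sum_le _ _).trans_eq ?_
    refine Finset.sum_congr rfl fun k _ => ?_
    simp [_root_.map_mul, Complex.norm_conj, RCLike.star_def]
  calc norm11 (∑ k, vecMulVec (g k) (star (g k)))
      ≤ ∑ i, ∑ j, ∑ k, ‖g k i‖ * ‖g k j‖ := by
        unfold norm11
        exact Finset.sum_le_sum fun i _ => Finset.sum_le_sum fun j _ => h1 i j
    _ = ∑ i, ∑ k, ∑ j, ‖g k i‖ * ‖g k j‖ := by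
        exact Finset.sum_congr rfl fun i _ => Finset.sum_comm
    _ = ∑ k, ∑ i, ∑ j, ‖g k i‖ * ‖g k j‖ := Finset.sum_comm
    _ = ∑ k, (l1n (g k)) ^ 2 := by
        refine Finset.sum_congr rfl fun k _ => ?_
        simp [l1n, sq, Finset.sum_mul, Finset.mul_sum, mul_comm]

set_option maxHeartbeats 2000000 in
theorem stmt19 (a d f : ℝ) (b c e : ℂ)
    (A : Matrix (Fin 3) (Fin 3) ℂ)
    (hAdef : A = !![(a : ℂ), b, c;
                    (starRingEnd ℂ) b, (d : ℂ), e;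
                    (starRingEnd ℂ) c, (starRingEnd ℂ) e, (f : ℂ)])
    (hA : A.PosSemidef) (ha : 0 < a) (had : 0 < a * d - ‖b‖ ^ 2) :
    gammaPlus A ≤ norm11 A +
      2 * (‖(a : ℂ) * e - (starRingEnd ℂ) b * c‖
            + ‖b‖ * ‖c‖ - a * ‖e‖) / a ∧
    (‖(a : ℂ) * e - (starRingEnd ℂ) b * c‖
        + ‖b‖ * ‖c‖ = a * ‖e‖ →
      gammaPlus A = norm11 A) := by
  have hb2 : ∀ z : ℂ, ((‖z‖ : ℝ) : ℂ) ^ 2 = z * (starRingEnd ℂ) z := by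
    intro z
    rw [← Complex.ofReal_pow, Complex.sq_norm]
    exact_mod_cast (Complex.mul_conj z).symm
  have ha0 : (a:ℂ) ≠ 0 := by exact_mod_cast ha.ne'
  set d' : ℝ := d - ‖b‖ ^ 2 / a with hd'def
  have hd' : 0 < d' := by
    have : d' = (a * d - ‖b‖ ^ 2) / a := by field_simp [hd'def]; rw [hd'def, sub_mul, div_mul_cancel₀ _ ha.ne']; ring
    rw [this]; positivity
  have hd0 : (d':ℂ) ≠ 0 := by exact_mod_cast hd'.ne'
  set e' : ℂ := e - (starRingEnd ℂ) b * c / a with he'def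
  set s : ℝ := f - ‖c‖ ^ 2 / a - ‖e'‖ ^ 2 / d' with hsdef
  have herw' : (starRingEnd ℂ) e = (starRingEnd ℂ) e' + b * (starRingEnd ℂ) c / ↑a := by
    rw [he'def]
    simp only [map_sub, map_div₀, _root_.map_mul, Complex.conj_ofReal, Complex.conj_conj]
    ring
  have herw : e = e' + (starRingEnd ℂ) b * c / (a:ℂ) := by rw [he'def]; ring
  have hdrw : ((d:ℝ):ℂ) = ↑d' + b * (starRingEnd ℂ) b / ↑a := by
    rw [hd'def]; push_cast; rw [hb2]; ring
  have hfrw : ((f:ℝ):ℂ) = ↑s + c * (starRingEnd ℂ) c / ↑a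
      + e' * (starRingEnd ℂ) e' / ↑d' := by
    rw [hsdef]; push_cast; rw [hb2, hb2]; ring
  -- s ≥ 0 from positive semidefiniteness
  have hs : 0 ≤ s := by
    set v : Fin 3 → ℂ := ![-(b * (-(e'/d')) + c) / a, -(e'/d'), 1] with hv
    have hQ := hA.dotProduct_mulVec_nonneg v
    have hQval : star v ⬝ᵥ A *ᵥ v = (s : ℂ) := by
      simp only [hAdef, hv, dotProduct, mulVec, Fin.sum_univ_three, Pi.star_apply,
        RCLike.star_def, map_neg, map_div₀,
        _root_.map_mul, map_add, map_sub, _root_.map_one, Complex.conj_ofReal, Complex.conj_conj]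
      simp only [Matrix.cons_val', Matrix.cons_val_zero, Matrix.cons_val_one, Matrix.head_cons,
        Matrix.empty_val', Matrix.cons_val_fin_one, Matrix.head_fin_const,
        Matrix.cons_val_two, Matrix.tail_cons, Matrix.of_apply, _root_.map_one]
      rw [hdrw, herw', herw, hfrw]
      field_simp
      ring
    rw [hQval] at hQ
    exact Complex.zero_le_real.mp hQ
  -- the explicit Cholesky decomposition
  set α := Real.sqrt a with hαdef
  set β := Real.sqrt d' with hβdef
  set γ := Real.sqrt s with hγdef
  have hα2r : α ^ 2 = a := Real.sq_sqrt ha.le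
  have hβ2r : β ^ 2 = d' := Real.sq_sqrt hd'.le
  have hγ2r : γ ^ 2 = s := Real.sq_sqrt hs
  have hα2 : ((α:ℝ):ℂ) ^ 2 = (a:ℂ) := by rw [← Complex.ofReal_pow, hα2r]
  have hβ2 : ((β:ℝ):ℂ) ^ 2 = (d':ℂ) := by rw [← Complex.ofReal_pow, hβ2r]
  have hγ2 : ((γ:ℝ):ℂ) ^ 2 = (s:ℂ) := by rw [← Complex.ofReal_pow, hγ2r]
  have hαpos : 0 < α := Real.sqrt_pos.mpr ha
  have hβpos : 0 < β := Real.sqrt_pos.mpr hd'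
  have hγnn : 0 ≤ γ := Real.sqrt_nonneg _
  have hα0 : ((α:ℝ):ℂ) ≠ 0 := by exact_mod_cast hαpos.ne'
  have hβ0 : ((β:ℝ):ℂ) ≠ 0 := by exact_mod_cast hβpos.ne'
  set g : Fin 3 → Fin 3 → ℂ :=
    ![![(α:ℂ), (starRingEnd ℂ) b / (α:ℂ), (starRingEnd ℂ) c / (α:ℂ)],
      ![0, (β:ℂ), (starRingEnd ℂ) e' / (β:ℂ)],
      ![0, 0, (γ:ℂ)]] with hgdef
  have hdecomp : A = ∑ k, vecMulVec (g k) (star (g k)) := by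
    ext i j
    rw [hAdef]
    fin_cases i <;> fin_cases j <;>
      simp only [show (⟨2, by decide⟩ : Fin 3) = (2 : Fin 3) from rfl, hgdef,
        Matrix.sum_apply, vecMulVec_apply, Pi.star_apply, Fin.sum_univ_three,
        RCLike.star_def, map_div₀, _root_.map_mul, Complex.conj_ofReal, Complex.conj_conj,
        Matrix.cons_val', Matrix.cons_val_zero, Matrix.cons_val_one, Matrix.head_cons,
        Matrix.empty_val', Matrix.cons_val_fin_one, Matrix.head_fin_const,
        Matrix.cons_val_two, Matrix.tail_cons, Fin.mk_zero, Fin.mk_one, Matrix.of_apply,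
        _root_.map_zero, mul_zero, zero_mul, add_zero, zero_add]
    · linear_combination (-1 : ℂ) * hα2
    · field_simp
    · field_simp
    · field_simp
    · rw [hdrw, ← hα2, ← hβ2]; field_simp; ring
    · rw [herw, ← hα2]; field_simp; ring
    · field_simp
    · rw [herw', ← hα2]; field_simp; ring
    · rw [hfrw, ← hα2, ← hβ2, ← hγ2]; field_simp; ring
  -- the value of the decomposition
  have hl1 : ∑ k, (l1n (g k)) ^ 2 =
      (α + ‖b‖ / α + ‖c‖ / α) ^ 2
      + (β + ‖e'‖ / β) ^ 2 + γ ^ 2 := by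
    simp [l1n, hgdef, Fin.sum_univ_three, map_div₀, Complex.norm_conj,
      Complex.norm_real, Real.norm_eq_abs, abs_of_pos hαpos, abs_of_pos hβpos, abs_of_nonneg hγnn,
      Matrix.vecHead, Matrix.vecTail]
  -- norm11 of A
  have hd0' : 0 < d := by nlinarith [norm_nonneg b, sq_nonneg (‖b‖)]
  have hf0 : 0 ≤ f := by
    have : f = s + ‖c‖ ^ 2 / a + ‖e'‖ ^ 2 / d' := by
      rw [hsdef]; ring
    rw [this]; positivity
  have hn11 : norm11 A = a + d + f + 2 * ‖b‖ + 2 * ‖c‖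
      + 2 * ‖e‖ := by
    simp [norm11, hAdef, Fin.sum_univ_three, Complex.norm_conj, Complex.norm_real, Real.norm_eq_abs,
      abs_of_pos ha, abs_of_pos hd0', abs_of_nonneg hf0]
    ring
  have habs : ‖(a : ℂ) * e - (starRingEnd ℂ) b * c‖ = a * ‖e'‖ := by
    have h1 : (a : ℂ) * e - (starRingEnd ℂ) b * c = (a:ℂ) * e' := by
      rw [he'def]; field_simp
    rw [h1, norm_mul, Complex.norm_real, Real.norm_eq_abs, abs_of_pos ha]
  -- the total value equals the claimed bound
  have hval : ∑ k, (l1n (g k)) ^ 2 = norm11 A +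
      2 * (‖(a : ℂ) * e - (starRingEnd ℂ) b * c‖
            + ‖b‖ * ‖c‖ - a * ‖e‖) / a := by
    rw [hl1, hn11, habs]
    have hdr : d = β ^ 2 + (‖b‖) ^ 2 / α ^ 2 := by
      rw [hβ2r, hα2r, hd'def]; ring
    have hfr : f = γ ^ 2 + (‖c‖) ^ 2 / α ^ 2 + (‖e'‖) ^ 2 / β ^ 2 := by
      rw [hγ2r, hα2r, hβ2r, hsdef]; ring
    rw [hdr, hfr, ← hα2r]
    field_simp
    ring
  -- assemble
  have hmem : (∑ k, (l1n (g k)) ^ 2) ∈ {r : ℝ | ∃ (m : ℕ) (g : Fin m → Fin 3 → ℂ),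
      A = ∑ k, vecMulVec (g k) (star (g k)) ∧ r = ∑ k, (l1n (g k)) ^ 2} :=
    ⟨3, g, hdecomp, rfl⟩
  have hbdd : BddBelow {r : ℝ | ∃ (m : ℕ) (g : Fin m → Fin 3 → ℂ),
      A = ∑ k, vecMulVec (g k) (star (g k)) ∧ r = ∑ k, (l1n (g k)) ^ 2} := by
    refine ⟨0, ?_⟩
    rintro r ⟨m, g', -, rfl⟩
    positivity
  have hub : gammaPlus A ≤ ∑ k, (l1n (g k)) ^ 2 := csInf_le hbdd hmem
  have hub' : gammaPlus A ≤ norm11 A +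
      2 * (‖(a : ℂ) * e - (starRingEnd ℂ) b * c‖
            + ‖b‖ * ‖c‖ - a * ‖e‖) / a := by
    rw [← hval]; exact hub
  refine ⟨hub', fun h => ?_⟩
  have hlow : norm11 A ≤ gammaPlus A := by
    refine le_csInf ⟨_, hmem⟩ ?_
    rintro r ⟨m, g', hg', rfl⟩
    rw [hg']
    exact norm11_le_sum' g'
  have : gammaPlus A ≤ norm11 A := by
    have h0 : ‖(a : ℂ) * e - (starRingEnd ℂ) b * c‖
        + ‖b‖ * ‖c‖ - a * ‖e‖ = 0 := by
      rw [h]; ring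
    calc gammaPlus A ≤ _ := hub'
      _ = norm11 A := by rw [h0]; ring
  exact le_antisymm this hlow
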